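/- Let Y be a random variable with Gaussian law N(m, σ²), m ∈ ℝ, σ > 0, and let F(t) = Φ((t − m)/σ) be its cumulative distribution function. Then E[Y·F(Y)] = (1/2)·(m + σ/√π). -/

import Mathlib

open MeasureTheory

/-- The probability density function of the standard normal distribution `N(0,1)`. -/
noncomputable def stdNormalPDF (u : ℝ) : ℝ :=
  Real.exp (-u ^ 2 / 2) / Real.sqrt (2 * Real.pi)

/-- The cumulative distribution function of the standard normal distribution `N(0,1)`. -/
noncomputable def stdNormalCDF (z : ℝ) : ℝ :=
  ∫ u in Set.Iic z, stdNormalPDF u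

open Real Filter
open scoped NNReal ENNReal

lemma contPDF : Continuous stdNormalPDF := by
  unfold stdNormalPDF
  exact (Real.continuous_exp.comp (by continuity)).div_const _

lemma pdf_nonneg (u : ℝ) : 0 ≤ stdNormalPDF u :=
  div_nonneg (Real.exp_pos _).le (Real.sqrt_nonneg _)

lemma pdf_eq : stdNormalPDF = fun u => Real.exp (-(2⁻¹ : ℝ) * u ^ 2) * (Real.sqrt (2 * Real.pi))⁻¹ := by
  funext u
  rw [stdNormalPDF, div_eq_mul_inv]
  ring_nf

lemma integrablePDF : Integrable stdNormalPDF := by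
  rw [pdf_eq]
  exact (integrable_exp_neg_mul_sq (by norm_num)).mul_const _

lemma integralPDF : ∫ u, stdNormalPDF u = 1 := by
  rw [pdf_eq]
  rw [MeasureTheory.integral_mul_const, integral_gaussian]
  have h : (0:ℝ) < 2 * Real.pi := by positivity
  rw [show Real.pi / 2⁻¹ = 2 * Real.pi by ring]
  field_simp

lemma cdf_eq (z : ℝ) :
    stdNormalCDF z = stdNormalCDF 0 + ∫ u in (0:ℝ)..z, stdNormalPDF u := by
  unfold stdNormalCDF
  rw [← intervalIntegral.integral_Iic_sub_Iic integrablePDF.integrableOn integrablePDF.integrableOn]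
  ring

lemma hasDerivCDF (z : ℝ) : HasDerivAt stdNormalCDF (stdNormalPDF z) z := by
  have h : HasDerivAt (fun t => stdNormalCDF 0 + ∫ u in (0:ℝ)..t, stdNormalPDF u)
      (stdNormalPDF z) z := by
    refine HasDerivAt.const_add _ ?_
    exact intervalIntegral.integral_hasDerivAt_right
      (integrablePDF.intervalIntegrable)
      (contPDF.stronglyMeasurable.stronglyMeasurableAtFilter)
      contPDF.continuousAt
  exact h.congr_of_eventuallyEq (Filter.Eventually.of_forall fun t => cdf_eq t)

lemma cdf_nonneg (z : ℝ) : 0 ≤ stdNormalCDF z :=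
  setIntegral_nonneg measurableSet_Iic fun u _ => pdf_nonneg u

lemma cdf_le_one (z : ℝ) : stdNormalCDF z ≤ 1 := by
  rw [← integralPDF]
  exact setIntegral_le_integral integrablePDF (Filter.Eventually.of_forall fun u => pdf_nonneg u)

lemma cdf_tendsto_atTop : Tendsto stdNormalCDF atTop (nhds 1) := by
  have h := intervalIntegral_tendsto_integral_Ioi (0:ℝ) integrablePDF.integrableOn tendsto_id
  have h2 : Tendsto stdNormalCDF atTop
      (nhds (stdNormalCDF 0 + ∫ u in Set.Ioi (0:ℝ), stdNormalPDF u)) :=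
    (tendsto_const_nhds.add h).congr fun z => (cdf_eq z).symm
  convert h2 using 2
  rw [stdNormalCDF,
    intervalIntegral.integral_Iic_add_Ioi integrablePDF.integrableOn integrablePDF.integrableOn,
    integralPDF]

lemma cdf_tendsto_atBot : Tendsto stdNormalCDF atBot (nhds 0) := by
  have h := intervalIntegral_tendsto_integral_Iic (0:ℝ) integrablePDF.integrableOn
    (tendsto_id (α := ℝ))
  have h2 : Tendsto stdNormalCDF atBot
      (nhds (stdNormalCDF 0 - ∫ u in Set.Iic (0:ℝ), stdNormalPDF u)) := by
    refine (tendsto_const_nhds.sub h).congr fun z => ?_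
    rw [cdf_eq z, intervalIntegral.integral_symm]
    simp only [id]
    ring
  simpa only [stdNormalCDF, sub_self] using h2

lemma pdf_tendsto_atTop : Tendsto stdNormalPDF atTop (nhds 0) := by
  rw [pdf_eq]
  have h1 : Tendsto (fun u : ℝ => -(2⁻¹:ℝ) * u ^ 2) atTop atBot := by
    apply Tendsto.const_mul_atTop_of_neg (by norm_num)
    exact tendsto_pow_atTop (by norm_num)
  simpa using ((Real.tendsto_exp_atBot.comp h1).mul_const (Real.sqrt (2*Real.pi))⁻¹)

lemma pdf_neg (u : ℝ) : stdNormalPDF (-u) = stdNormalPDF u := by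
  rw [stdNormalPDF, stdNormalPDF, Even.neg_pow even_two]

lemma pdf_tendsto_atBot : Tendsto stdNormalPDF atBot (nhds 0) := by
  have := pdf_tendsto_atTop.comp tendsto_neg_atBot_atTop
  exact this.congr fun u => pdf_neg u

lemma contCDF : Continuous stdNormalCDF :=
  continuous_iff_continuousAt.2 fun z => (hasDerivCDF z).continuousAt

lemma intgA : Integrable (fun z => stdNormalPDF z * stdNormalCDF z) := by
  refine integrablePDF.mono ((contPDF.mul contCDF).aestronglyMeasurable)
    (Eventually.of_forall fun z => ?_)
  rw [Real.norm_eq_abs, Real.norm_eq_abs, abs_mul, abs_of_nonneg (pdf_nonneg z),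
    abs_of_nonneg (cdf_nonneg z)]
  nlinarith [cdf_le_one z, pdf_nonneg z, cdf_nonneg z]

lemma intg_id_pdf : Integrable (fun z : ℝ => z * stdNormalPDF z) := by
  rw [pdf_eq]
  have := (integrable_mul_exp_neg_mul_sq (show (0:ℝ) < 2⁻¹ by norm_num)).mul_const
    (Real.sqrt (2 * Real.pi))⁻¹
  exact this.congr (Eventually.of_forall fun z => by ring)

lemma intgB : Integrable (fun z : ℝ => z * stdNormalPDF z * stdNormalCDF z) := by
  refine intg_id_pdf.mono ((continuous_id.mul contPDF |>.mul contCDF).aestronglyMeasurable)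
    (Eventually.of_forall fun z => ?_)
  simp only [Real.norm_eq_abs, abs_mul]
  have h1 : |stdNormalCDF z| ≤ 1 := abs_le.2 ⟨by linarith [cdf_nonneg z], cdf_le_one z⟩
  exact mul_le_of_le_one_right (mul_nonneg (abs_nonneg z) (abs_nonneg _)) h1

lemma pdf_sq_eq : (fun z : ℝ => stdNormalPDF z ^ 2)
    = fun z => Real.exp (-1 * z ^ 2) * (2 * Real.pi)⁻¹ := by
  funext z
  rw [stdNormalPDF, div_pow, Real.sq_sqrt (by positivity : (0:ℝ) ≤ 2 * Real.pi), sq,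
    ← Real.exp_add, div_eq_mul_inv, show -z^2/2 + -z^2/2 = -1 * z^2 by ring]

lemma intg_pdf_sq : Integrable (fun z : ℝ => stdNormalPDF z ^ 2) := by
  rw [pdf_sq_eq]
  exact (integrable_exp_neg_mul_sq one_pos).mul_const _

lemma integral_pdf_sq : ∫ z : ℝ, stdNormalPDF z ^ 2 = 1 / (2 * Real.sqrt Real.pi) := by
  rw [pdf_sq_eq, MeasureTheory.integral_mul_const, integral_gaussian, div_one]
  have hs : Real.sqrt Real.pi * Real.sqrt Real.pi = Real.pi := Real.mul_self_sqrt Real.pi_pos.le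
  have h1 : Real.sqrt Real.pi ≠ 0 := by positivity
  field_simp
  linarith [hs]

lemma hasDerivPDF (z : ℝ) : HasDerivAt stdNormalPDF (-z * stdNormalPDF z) z := by
  have h1 : HasDerivAt (fun x : ℝ => -x ^ 2 / 2) (-z) z := by
    have := ((hasDerivAt_pow 2 z).neg).div_const 2
    refine this.congr_deriv ?_
    simp
    ring
  have h2 := (h1.exp).div_const (Real.sqrt (2 * Real.pi))
  have hfn : stdNormalPDF = fun x : ℝ => Real.exp (-x ^ 2 / 2) / Real.sqrt (2 * Real.pi) := rfl
  rw [hfn]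
  refine h2.congr_deriv ?_
  beta_reduce
  ring

lemma hasDerivG (z : ℝ) : HasDerivAt (fun x => -(stdNormalPDF x * stdNormalCDF x))
    (z * stdNormalPDF z * stdNormalCDF z - stdNormalPDF z ^ 2) z := by
  have := ((hasDerivPDF z).mul (hasDerivCDF z)).neg
  refine this.congr_deriv ?_
  ring

lemma intA : ∫ z : ℝ, stdNormalPDF z * stdNormalCDF z = 1 / 2 := by
  have key : ∀ x : ℝ, ∫ z in (-x)..x, stdNormalPDF z * stdNormalCDF z
      = stdNormalCDF x ^ 2 / 2 - stdNormalCDF (-x) ^ 2 / 2 := by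
    intro x
    refine intervalIntegral.integral_eq_sub_of_hasDerivAt
      (f := fun t => stdNormalCDF t ^ 2 / 2) (fun z _ => ?_)
      (intgA.intervalIntegrable)
    have := ((hasDerivCDF z).pow 2).div_const 2
    refine this.congr_deriv ?_
    simp
    ring
  have t1 := intervalIntegral_tendsto_integral intgA tendsto_neg_atTop_atBot
    (tendsto_id (α := ℝ))
  simp only [id] at t1
  have t2 : Tendsto (fun x : ℝ => stdNormalCDF x ^ 2 / 2 - stdNormalCDF (-x) ^ 2 / 2) atTop
      (nhds (1 / 2)) := by
    have h1 := (cdf_tendsto_atTop.pow 2).div_const 2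
    have h2 := (((cdf_tendsto_atBot.comp tendsto_neg_atTop_atBot)).pow 2).div_const 2
    have := h1.sub h2
    norm_num at this
    convert this using 1
  exact tendsto_nhds_unique t1 (t2.congr fun x => (key x).symm)

lemma intB : ∫ z : ℝ, z * stdNormalPDF z * stdNormalCDF z = 1 / (2 * Real.sqrt Real.pi) := by
  have key : ∀ x : ℝ, ∫ z in (-x)..x, z * stdNormalPDF z * stdNormalCDF z
      = (-(stdNormalPDF x * stdNormalCDF x) + (stdNormalPDF (-x) * stdNormalCDF (-x)))
        + ∫ z in (-x)..x, stdNormalPDF z ^ 2 := by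
    intro x
    have h1 : ∫ z in (-x)..x, (z * stdNormalPDF z * stdNormalCDF z - stdNormalPDF z ^ 2)
        = -(stdNormalPDF x * stdNormalCDF x) - -(stdNormalPDF (-x) * stdNormalCDF (-x)) :=
      intervalIntegral.integral_eq_sub_of_hasDerivAt
        (f := fun t => -(stdNormalPDF t * stdNormalCDF t)) (fun z _ => hasDerivG z)
        ((intgB.sub intg_pdf_sq).intervalIntegrable)
    have h2 := intervalIntegral.integral_sub (intgB.intervalIntegrable (a := -x) (b := x))
      (intg_pdf_sq.intervalIntegrable (a := -x) (b := x))
    rw [h2] at h1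
    linarith [h1]
  have t1 := intervalIntegral_tendsto_integral intgB tendsto_neg_atTop_atBot
    (tendsto_id (α := ℝ))
  simp only [id] at t1
  have t2 : Tendsto (fun x : ℝ =>
      (-(stdNormalPDF x * stdNormalCDF x) + (stdNormalPDF (-x) * stdNormalCDF (-x)))
        + ∫ z in (-x)..x, stdNormalPDF z ^ 2) atTop (nhds (1 / (2 * Real.sqrt Real.pi))) := by
    have hA : Tendsto (fun x : ℝ => -(stdNormalPDF x * stdNormalCDF x)
        + stdNormalPDF (-x) * stdNormalCDF (-x)) atTop (nhds 0) := by
      have hp2 := pdf_tendsto_atBot.comp tendsto_neg_atTop_atBot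
      have hc2 := cdf_tendsto_atBot.comp tendsto_neg_atTop_atBot
      have := ((pdf_tendsto_atTop.mul cdf_tendsto_atTop).neg).add (hp2.mul hc2)
      norm_num at this
      exact this
    have hB := intervalIntegral_tendsto_integral intg_pdf_sq tendsto_neg_atTop_atBot
      (tendsto_id (α := ℝ))
    simp only [id] at hB
    rw [integral_pdf_sq] at hB
    have := hA.add hB
    norm_num at this ⊢
    exact this
  exact tendsto_nhds_unique t1 (t2.congr fun x => (key x).symm)

lemma pdfReal01 : ProbabilityTheory.gaussianPDFReal 0 1 = stdNormalPDF := by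
  funext x
  rw [ProbabilityTheory.gaussianPDFReal, stdNormalPDF]
  simp only [NNReal.coe_one, mul_one, sub_zero]
  rw [mul_comm, div_eq_mul_inv]
  ring

/-- For `Y ∼ N(m, σ²)` with CDF `F(t) = Φ((t − m)/σ)`,
`E[Y·F(Y)] = (1/2)·(m + σ/√π)`. -/
theorem gaussian_cdf_term (m σ : ℝ) (hσ : 0 < σ)
    (v : NNReal) (hv : (v : ℝ) = σ ^ 2) :
    (∫ x, x * stdNormalCDF ((x - m) / σ) ∂(ProbabilityTheory.gaussianReal m v)) =
      (1 / 2) * (m + σ / Real.sqrt Real.pi) := by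
  have hσ' : σ ≠ 0 := ne_of_gt hσ
  have hmap : ProbabilityTheory.gaussianReal m v
      = Measure.map (fun z => σ * z + m) (ProbabilityTheory.gaussianReal 0 1) := by
    have h1 : Measure.map (σ * ·) (ProbabilityTheory.gaussianReal 0 1)
        = ProbabilityTheory.gaussianReal 0 v := by
      rw [ProbabilityTheory.gaussianReal_map_const_mul]
      congr 1
      · ring
      · rw [mul_one]
        ext
        simp [hv]
    have h2 : Measure.map (· + m) (ProbabilityTheory.gaussianReal 0 v)
        = ProbabilityTheory.gaussianReal m v := by
      rw [ProbabilityTheory.gaussianReal_map_add_const, zero_add]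
    rw [← h2, ← h1, Measure.map_map (measurable_add_const m) (measurable_const_mul σ)]
    rfl
  have hfc : Continuous fun x : ℝ => x * stdNormalCDF ((x - m) / σ) :=
    continuous_id.mul (contCDF.comp ((continuous_id.sub continuous_const).div_const σ))
  rw [hmap, integral_map (measurable_const_mul σ |>.add_const m).aemeasurable
    hfc.aestronglyMeasurable]
  have harg : ∀ z : ℝ, (σ * z + m - m) / σ = z := fun z => by field_simp; ring
  simp_rw [harg]
  rw [ProbabilityTheory.gaussianReal_of_var_ne_zero 0 one_ne_zero]
  have hpdf : ProbabilityTheory.gaussianPDF 0 1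
      = fun x => ((Real.toNNReal (stdNormalPDF x) : ℝ≥0) : ℝ≥0∞) := by
    funext x
    rw [ProbabilityTheory.gaussianPDF, pdfReal01]
    rfl
  rw [hpdf, integral_withDensity_eq_integral_smul
    ((contPDF.measurable).real_toNNReal) _]
  have hsmul : ∀ z : ℝ, (Real.toNNReal (stdNormalPDF z)) • ((σ * z + m) * stdNormalCDF z)
      = σ * (z * stdNormalPDF z * stdNormalCDF z) + m * (stdNormalPDF z * stdNormalCDF z) := by
    intro z
    rw [NNReal.smul_def, Real.coe_toNNReal _ (pdf_nonneg z), smul_eq_mul]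
    ring
  simp_rw [hsmul]
  rw [integral_add (intgB.const_mul σ) (intgA.const_mul m), MeasureTheory.integral_const_mul,
    MeasureTheory.integral_const_mul, intA, intB]
  have h1 : Real.sqrt Real.pi ≠ 0 := by positivity
  field_simp
  ring
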